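/- There exist a type X with exactly three elements and a relation C : Set X → X → Prop satisfying the P-space axioms (R) and (T) as well as condition (H) (for every A ⊆ X, C A y and C A z imply y = z), such that the relation x ≤ y defined by C {x, y} y is not transitive. -/
import Mathlib

def Fdown : Fin 3 → Set (Fin 3) := ![{0}, {0, 1}, Set.univ]

def Crel (A : Set (Fin 3)) (y : Fin 3) : Prop :=
  y ∈ A ∧ A ⊆ Fdown y ∧ (y = 2 → (0 : Fin 3) ∈ A → (1 : Fin 3) ∈ A)

lemma Fdown_mem_self (x : Fin 3) : x ∈ Fdown x := by
  fin_cases x <;> simp [Fdown]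

lemma Fdown_trans {w z : Fin 3} (h : w ∈ Fdown z) : Fdown w ⊆ Fdown z := by
  fin_cases z <;> fin_cases w <;> simp_all [Fdown]

theorem stmt12 :
    ∃ (X : Type) (C : Set X → X → Prop),
      Nat.card X = 3 ∧
      (∀ x : X, C {x} x) ∧
      (∀ (I : Type) (A : I → Set X) (y : I → X) (z : X),
        (∀ i, C (A i) (y i)) → C (Set.range y) z → C (⋃ i, A i) z) ∧
      (∀ (A : Set X) (y z : X), C A y → C A z → y = z) ∧
      ¬ Transitive (fun x y : X => C {x, y} y) := by
  refine ⟨Fin 3, Crel, by simp, ?_, ?_, ?_, ?_⟩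
  · -- (R)
    intro x
    refine ⟨rfl, ?_, ?_⟩
    · intro a ha; rw [ha]; exact Fdown_mem_self x
    · intro hx2 h0; simp_all
  · -- (T)
    intro I A y z hA hz
    obtain ⟨hzr, hsub, hcl⟩ := hz
    obtain ⟨i0, hi0⟩ := hzr
    refine ⟨Set.mem_iUnion.2 ⟨i0, hi0 ▸ (hA i0).1⟩, ?_, ?_⟩
    · intro a ha
      obtain ⟨i, hi⟩ := Set.mem_iUnion.1 ha
      exact Fdown_trans (hsub ⟨i, rfl⟩) ((hA i).2.1 hi)
    · intro hz2 h0
      obtain ⟨i, hi⟩ := Set.mem_iUnion.1 h0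
      have h0F : (0 : Fin 3) ∈ Fdown (y i) := (hA i).2.1 hi
      have := hA i
      -- case on y i
      have tri : ∀ v : Fin 3, v = 0 ∨ v = 1 ∨ v = 2 := by decide
      rcases tri (y i) with h | h | h
      · -- y i = 0, so 0 ∈ range y, hence 1 ∈ range y
        have h1r : (1 : Fin 3) ∈ Set.range y := hcl hz2 (h ▸ ⟨i, rfl⟩ : (0 : Fin 3) ∈ Set.range y)
        obtain ⟨j, hj⟩ := h1r
        exact Set.mem_iUnion.2 ⟨j, hj ▸ (hA j).1⟩
      · -- y i = 1, so 1 ∈ A i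
        exact Set.mem_iUnion.2 ⟨i, h ▸ (hA i).1⟩
      · -- y i = 2, use closure of A i
        exact Set.mem_iUnion.2 ⟨i, (hA i).2.2 h hi⟩
  · -- (H)
    intro A y z hy hz
    have h1 : y ∈ Fdown z := hz.2.1 hy.1
    have h2 : z ∈ Fdown y := hy.2.1 hz.1
    fin_cases y <;> fin_cases z <;> simp_all [Fdown]
  · -- not transitive
    intro htr
    have h01 : Crel {0, 1} 1 := by
      refine ⟨Or.inr rfl, ?_, fun h => absurd h (by decide)⟩
      intro a ha; simpa [Fdown] using ha
    have h12 : Crel {1, 2} 2 := by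
      refine ⟨Or.inr rfl, fun a _ => Set.mem_univ a, ?_⟩
      rintro _ (h | h)
      · exact absurd h (by decide)
      · exact absurd h (by decide)
    have h02 := htr h01 h12
    rcases h02.2.2 rfl (Or.inl rfl) with h | h
    · exact absurd h (by decide)
    · exact absurd h (by decide)
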